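/- arXiv:1905.06253 — 2 statements merged into one kernel-verified Lean document; each statement's English description precedes it below -/
import Mathlib

section
/- Let G be the generating function of a ℕ-valued random variable N with E[N] > 1. Then G has a fixed point η ∈ [0,1) with G(η) = η, i.e., a fixed point strictly less than 1 exists. -/
open scoped BigOperators ENNReal

/-- Supercritical branching process: if `N` is a ℕ-valued random variable with pmf `p`
and mean `E[N] > 1` (possibly infinite, expressed in `ℝ≥0∞`), then its generating
function `G(z) = ∑ k, p k z^k` has a fixed point `η ∈ [0,1)`, i.e., a fixed point
strictly less than `1`. -/
theorem pgf_fixedPoint_of_mean_gt_one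
    (p : ℕ → ℝ) (hp : ∀ k, 0 ≤ p k) (hp1 : ∑' (k : ℕ), p k = 1)
    (hmean : 1 < ∑' (k : ℕ), (k : ℝ≥0∞) * ENNReal.ofReal (p k)) :
    ∃ η ∈ Set.Ico (0 : ℝ) 1, ∑' (k : ℕ), p k * η ^ k = η := by
  -- p is summable
  have hps : Summable p := by
    by_contra h
    rw [tsum_eq_zero_of_not_summable h] at hp1
    norm_num at hp1
  -- clamp function
  set c : ℝ → ℝ := fun z => max 0 (min z 1) with hc
  have hc_cont : Continuous c := continuous_const.max (continuous_id.min continuous_const)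
  have hc_mem : ∀ z, 0 ≤ c z ∧ c z ≤ 1 := by
    intro z
    constructor
    · exact le_max_left _ _
    · exact max_le (by norm_num) (min_le_right _ _)
  have hc_eq : ∀ z ∈ Set.Icc (0:ℝ) 1, c z = z := by
    intro z hz
    simp [hc, min_eq_left hz.2, max_eq_right hz.1]
  -- F is continuous
  set F : ℝ → ℝ := fun z => ∑' k, p k * (c z) ^ k with hF
  have hFc : Continuous F := by
    apply continuous_tsum (u := p) ?_ hps
    · intro k z
      have h1 := (hc_mem z).1
      have h2 := (hc_mem z).2
      have : |c z| ^ k ≤ 1 := pow_le_one₀ (abs_nonneg _) (abs_le.2 ⟨by linarith, h2⟩)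
      calc ‖p k * (c z) ^ k‖ = p k * |c z| ^ k := by
            rw [norm_mul, Real.norm_eq_abs, Real.norm_eq_abs, abs_of_nonneg (hp k), abs_pow]
        _ ≤ p k * 1 := mul_le_mul_of_nonneg_left this (hp k)
        _ = p k := mul_one _
    · intro k
      exact (continuous_const.mul ((hc_cont).pow k))
  -- summability of the series at points of [0,1]
  have hsum : ∀ z ∈ Set.Icc (0:ℝ) 1, Summable (fun k => p k * z ^ k) := by
    intro z hz
    refine Summable.of_nonneg_of_le (fun k => mul_nonneg (hp k) (pow_nonneg hz.1 k)) ?_ hps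
    intro k
    have : z ^ k ≤ 1 := pow_le_one₀ hz.1 hz.2
    calc p k * z ^ k ≤ p k * 1 := mul_le_mul_of_nonneg_left this (hp k)
      _ = p k := mul_one _
  have hFeq : ∀ z ∈ Set.Icc (0:ℝ) 1, F z = ∑' k, p k * z ^ k := by
    intro z hz
    simp only [hF, hc_eq z hz]
  -- Step 1: finite truncation with mean > 1
  obtain ⟨s, hs⟩ : ∃ s : Finset ℕ, 1 < ∑ k ∈ s, (k : ℝ) * p k := by
    rw [ENNReal.tsum_eq_iSup_sum] at hmean
    obtain ⟨s, hs⟩ := lt_iSup_iff.mp hmean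
    refine ⟨s, ?_⟩
    have : ∑ k ∈ s, (k : ℝ≥0∞) * ENNReal.ofReal (p k)
        = ENNReal.ofReal (∑ k ∈ s, (k : ℝ) * p k) := by
      rw [ENNReal.ofReal_sum_of_nonneg (fun k _ => mul_nonneg (Nat.cast_nonneg k) (hp k))]
      refine Finset.sum_congr rfl (fun k _ => ?_)
      rw [ENNReal.ofReal_mul (Nat.cast_nonneg k), ENNReal.ofReal_natCast]
    rw [this] at hs
    have := (ENNReal.one_lt_ofReal).mp hs
    exact this
  -- Step 2: continuous truncated derivative-like function
  set q : ℝ → ℝ := fun z => ∑ k ∈ s, p k * (∑ j ∈ Finset.range k, z ^ j) with hq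
  have hq_cont : Continuous q := by
    apply continuous_finset_sum
    intro k _
    exact continuous_const.mul (continuous_finset_sum _ (fun j _ => continuous_pow j))
  have hq1 : 1 < q 1 := by
    have : q 1 = ∑ k ∈ s, (k : ℝ) * p k := by
      refine Finset.sum_congr rfl (fun k _ => ?_)
      simp [mul_comm]
    rw [this]; exact hs
  -- find z₀ ∈ [0,1) with 1 < q z₀
  obtain ⟨z₀, hz₀mem, hz₀q⟩ : ∃ z₀ ∈ Set.Ico (0:ℝ) 1, 1 < q z₀ := by
    have hev : ∀ᶠ z in nhds (1:ℝ), 1 < q z :=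
      (hq_cont.tendsto 1).eventually (eventually_gt_nhds hq1)
    have hev' : ∀ᶠ z in nhdsWithin (1:ℝ) (Set.Ioo 0 1),
        1 < q z ∧ z ∈ Set.Ioo (0:ℝ) 1 :=
      (hev.filter_mono nhdsWithin_le_nhds).and self_mem_nhdsWithin
    have hne : (nhdsWithin (1:ℝ) (Set.Ioo 0 1)).NeBot := by
      apply mem_closure_iff_nhdsWithin_neBot.mp
      rw [closure_Ioo (by norm_num : (0:ℝ) ≠ 1)]
      exact ⟨by norm_num, le_refl 1⟩
    obtain ⟨z₀, h1, h2⟩ := hev'.exists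
    exact ⟨z₀, ⟨h2.1.le, h2.2⟩, h1⟩
  have hz₀0 : 0 ≤ z₀ := hz₀mem.1
  have hz₀1 : z₀ < 1 := hz₀mem.2
  have hz₀Icc : z₀ ∈ Set.Icc (0:ℝ) 1 := ⟨hz₀0, hz₀1.le⟩
  -- Step 3: G z₀ < z₀
  have hGz₀ : F z₀ < z₀ := by
    have key : 1 - F z₀ = ∑' k, p k * (1 - z₀ ^ k) := by
      have e1 : (fun k => p k * (1 - z₀ ^ k)) = fun k => p k - p k * z₀ ^ k := by
        ext k; ring
      rw [e1, Summable.tsum_sub hps (hsum z₀ hz₀Icc), hp1, hFeq z₀ hz₀Icc]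
    have hpow : ∀ k : ℕ, z₀ ^ k ≤ 1 := fun k => pow_le_one₀ hz₀0 hz₀1.le
    have hterm : ∀ k, 0 ≤ p k * (1 - z₀ ^ k) := fun k =>
      mul_nonneg (hp k) (sub_nonneg.2 (hpow k))
    have hsum2 : Summable (fun k => p k * (1 - z₀ ^ k)) := by
      have := hps.sub (hsum z₀ hz₀Icc)
      exact this.congr (fun k => by ring)
    have hge : ∑ k ∈ s, p k * (1 - z₀ ^ k) ≤ ∑' k, p k * (1 - z₀ ^ k) :=
      Summable.sum_le_tsum s (fun k _ => hterm k) hsum2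
    have hgeom : ∀ k : ℕ, 1 - z₀ ^ k = (1 - z₀) * ∑ j ∈ Finset.range k, z₀ ^ j := by
      intro k
      have := geom_sum_mul z₀ k
      nlinarith [this]
    have heq2 : ∑ k ∈ s, p k * (1 - z₀ ^ k) = (1 - z₀) * q z₀ := by
      rw [hq, Finset.mul_sum]
      refine Finset.sum_congr rfl (fun k _ => ?_)
      rw [hgeom k]; ring
    have h1 : (1 - z₀) * q z₀ ≤ 1 - F z₀ := by rw [key, ← heq2]; exact hge
    nlinarith [h1, hz₀q, hz₀1]
  -- Step 4: IVT
  have hF0 : 0 ≤ F 0 := by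
    rw [hFeq 0 (by norm_num)]
    exact tsum_nonneg (fun k => mul_nonneg (hp k) (pow_nonneg le_rfl k))
  set h : ℝ → ℝ := fun z => F z - z with hh
  have hhc : ContinuousOn h (Set.Icc 0 z₀) := (hFc.sub continuous_id).continuousOn
  have hsub : Set.Icc (h z₀) (h 0) ⊆ h '' Set.Icc 0 z₀ :=
    intermediate_value_Icc' hz₀0 hhc
  have h0mem : (0:ℝ) ∈ Set.Icc (h z₀) (h 0) := by
    constructor
    · simp only [hh]; linarith
    · simp only [hh]; linarith
  obtain ⟨η, hηmem, hηeq⟩ := hsub h0mem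
  refine ⟨η, ⟨hηmem.1, lt_of_le_of_lt hηmem.2 hz₀1⟩, ?_⟩
  have hηIcc : η ∈ Set.Icc (0:ℝ) 1 := ⟨hηmem.1, le_trans hηmem.2 hz₀1.le⟩
  have : F η = η := by simp only [hh] at hηeq; linarith
  rw [← hFeq η hηIcc]; exact this
end

section
/- Conversely, under the same setup, if for every c_0 ∈ (0,1), sup_{c≥c_0} |T^{(n)}(c) − f^{-1}(c)| → 0 in probability, then for every t_0 < ∞, sup_{t≤t_0} |a_n^{-1}X^{(n)}(t) − f(t)| → 0 in probability. -/
open MeasureTheory ProbabilityTheory Filter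
open scoped BigOperators Topology ENNReal

/-- Concentration of hitting times transfers back to the death process.  Let
`X^{(n)}` be pure death processes (non-increasing ℕ-valued paths) with deterministic
initial value `X^{(n)}(0) = a_n → ∞`, and let `f : [0,∞) → (0,1]` be strictly
decreasing with `f(0) = 1`, `f` and its inverse `finv` continuous.  If for every
`c₀ ∈ (0,1)`, `sup_{c ≥ c₀} |T^{(n)}(c) − finv(c)| → 0` in probability, where
`T^{(n)}(c) = min{t : a_n⁻¹ X^{(n)}(t) ≤ c}`, then for every `t₀ < ∞`,
`sup_{t ≤ t₀} |a_n⁻¹ X^{(n)}(t) − f(t)| → 0` in probability. -/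
theorem hitting_times_to_death_process
    {Ω : ℕ → Type*} [∀ n, MeasureSpace (Ω n)]
    [∀ n, IsProbabilityMeasure (ℙ : Measure (Ω n))]
    (a : ℕ → ℕ) (ha : Tendsto a atTop atTop)
    (X : ∀ n, Ω n → ℝ → ℕ)
    (hX0 : ∀ n ω, X n ω 0 = a n)
    (hmono : ∀ n ω, Antitone (X n ω))
    (f : ℝ → ℝ) (hf0 : f 0 = 1)
    (hfrange : ∀ t ∈ Set.Ici (0 : ℝ), f t ∈ Set.Ioc (0 : ℝ) 1)
    (hfanti : StrictAntiOn f (Set.Ici (0 : ℝ)))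
    (hfcont : ContinuousOn f (Set.Ici (0 : ℝ)))
    (finv : ℝ → ℝ)
    (hfinv : ∀ t ∈ Set.Ici (0 : ℝ), finv (f t) = t)
    (hfinvcont : ContinuousOn finv (f '' Set.Ici (0 : ℝ)))
    (T : ∀ n, Ω n → ℝ → ℝ)
    (hT : ∀ n ω c, T n ω c = sInf {t : ℝ | 0 ≤ t ∧ (X n ω t : ℝ) ≤ c * a n})
    (hconc : ∀ c₀ ∈ Set.Ioo (0 : ℝ) 1, ∀ ε > (0 : ℝ),
      Tendsto (fun n => (ℙ : Measure (Ω n))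
          {ω | ∃ c ∈ Set.Icc c₀ 1, ε < |T n ω c - finv c|})
        atTop (𝓝 0)) :
    ∀ t₀ : ℝ, ∀ ε > (0 : ℝ),
      Tendsto (fun n => (ℙ : Measure (Ω n))
          {ω | ∃ t ∈ Set.Icc (0 : ℝ) t₀, ε < |(X n ω t : ℝ) / a n - f t|})
        atTop (𝓝 0) := by
  intro t₀ ε hε
  rcases lt_or_ge t₀ 0 with ht₀ | ht₀
  · have hempty : ∀ n, {ω : Ω n | ∃ t ∈ Set.Icc (0 : ℝ) t₀,
        ε < |(X n ω t : ℝ) / a n - f t|} = ∅ := by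
      intro n
      apply Set.eq_empty_of_forall_notMem
      rintro ω ⟨t, ⟨h0, h1⟩, -⟩
      linarith
    simp only [hempty, measure_empty]
    exact tendsto_const_nhds
  -- main case : t₀ ≥ 0
  -- uniform continuity of f on [0, t₀+1]
  obtain ⟨η, hη0, hη1, hηuc⟩ : ∃ η > (0:ℝ), η ≤ 1 ∧ ∀ u ∈ Set.Icc (0:ℝ) (t₀+1),
      ∀ v ∈ Set.Icc (0:ℝ) (t₀+1), |u - v| ≤ η → |f u - f v| < ε/2 := by
    have hcomp : IsCompact (Set.Icc (0:ℝ) (t₀+1)) := isCompact_Icc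
    have hsub : Set.Icc (0:ℝ) (t₀+1) ⊆ Set.Ici 0 := fun x hx => hx.1
    have huc := hcomp.uniformContinuousOn_of_continuous (hfcont.mono hsub)
    rw [Metric.uniformContinuousOn_iff] at huc
    obtain ⟨η₀, hη₀, h⟩ := huc (ε/2) (by linarith)
    refine ⟨min (η₀/2) 1, by positivity, min_le_right _ _, ?_⟩
    intro u hu v hv huv
    have hd : dist u v < η₀ := by
      rw [Real.dist_eq]
      calc |u - v| ≤ min (η₀/2) 1 := huv
        _ ≤ η₀/2 := min_le_left _ _
        _ < η₀ := by linarith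
    have := h u hu v hv hd
    simpa [Real.dist_eq] using this
  set c₀ : ℝ := f (t₀ + 1) with hc₀def
  have ht₀1 : (0:ℝ) ≤ t₀ + 1 := by linarith
  have hc₀mem := hfrange (t₀+1) ht₀1
  have hc₀pos : 0 < c₀ := hc₀mem.1
  have hc₀lt1 : c₀ < 1 := by
    have := hfanti (Set.mem_Ici.mpr le_rfl) (Set.mem_Ici.mpr ht₀1) (by linarith)
    rw [hf0] at this; exact this
  set δ : ℝ := min (η/2) ((t₀+1)/2) with hδdef
  have hδ0 : 0 < δ := lt_min (by linarith) (by linarith)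
  have hδη : δ ≤ η/2 := min_le_left _ _
  have hδt : δ ≤ (t₀+1)/2 := min_le_right _ _
  have key := hconc c₀ ⟨hc₀pos, hc₀lt1⟩ δ hδ0
  have hA : AntitoneOn f (Set.Ici (0:ℝ)) := hfanti.antitoneOn
  -- deterministic core
  have hdet : ∀ n, 1 ≤ a n → ∀ ω : Ω n,
      (∀ c ∈ Set.Icc c₀ 1, |T n ω c - finv c| ≤ δ) →
      ∀ t ∈ Set.Icc (0:ℝ) t₀, |(X n ω t : ℝ) / a n - f t| < ε/2 := by
    intro n han ω H t ht
    obtain ⟨ht0, ht1⟩ := ht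
    have haR : (1:ℝ) ≤ (a n : ℝ) := by exact_mod_cast han
    have hapos : (0:ℝ) < (a n : ℝ) := by linarith
    -- the hitting set for c₀ is nonempty
    have hSne : {u : ℝ | 0 ≤ u ∧ (X n ω u : ℝ) ≤ c₀ * a n}.Nonempty := by
      by_contra hemp
      rw [Set.not_nonempty_iff_eq_empty] at hemp
      have hTc₀ : T n ω c₀ = 0 := by rw [hT, hemp, Real.sInf_empty]
      have hfc₀ : finv c₀ = t₀ + 1 := hfinv (t₀+1) (Set.mem_Ici.mpr ht₀1)
      have hh := H c₀ ⟨le_refl _, le_of_lt hc₀lt1⟩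
      rw [hTc₀, hfc₀] at hh
      rw [zero_sub, abs_neg, abs_of_nonneg ht₀1] at hh
      linarith
    -- lower bound : f t - X t / a < ε/2
    have hlow : f t - (X n ω t : ℝ) / a n < ε/2 := by
      have hs : t + η ∈ Set.Icc (0:ℝ) (t₀+1) := ⟨by linarith, by linarith⟩
      have hcle1 : f (t + η) ≤ 1 := (hfrange _ (Set.mem_Ici.mpr hs.1)).2
      have hcge : c₀ ≤ f (t + η) :=
        hA (Set.mem_Ici.mpr hs.1) (Set.mem_Ici.mpr ht₀1) hs.2
      have hfinvs : finv (f (t + η)) = t + η := hfinv _ (Set.mem_Ici.mpr hs.1)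
      have hH := H (f (t + η)) ⟨hcge, hcle1⟩
      rw [hfinvs] at hH
      have hTge : t + η - δ ≤ T n ω (f (t + η)) := by
        have := abs_le.mp hH; linarith [this.1]
      have hTt : t < T n ω (f (t + η)) := by linarith
      have hnot : ¬ ((X n ω t : ℝ) ≤ f (t + η) * a n) := by
        intro hle
        have hle2 : T n ω (f (t + η)) ≤ t := by
          rw [hT]
          exact csInf_le ⟨0, fun x hx => hx.1⟩ ⟨ht0, hle⟩
        linarith
      push_neg at hnot
      have hdiv : f (t + η) < (X n ω t : ℝ) / a n := by
        rw [lt_div_iff₀ hapos]; linarith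
      have habs : |t - (t + η)| ≤ η := by
        rw [show t - (t + η) = -η by ring, abs_neg, abs_of_pos hη0]
      have hfc := hηuc t ⟨ht0, by linarith⟩ (t + η) hs habs
      have : f t - f (t + η) < ε/2 := lt_of_le_of_lt (le_abs_self _) hfc
      linarith
    -- upper bound : X t / a - f t < ε/2
    have hupp : (X n ω t : ℝ) / a n - f t < ε/2 := by
      rcases lt_or_ge t η with hlt | hge
      · -- t < η : use X t ≤ X 0 = a n
        have hX : X n ω t ≤ a n := by
          have := hmono n ω ht0
          rwa [hX0] at this
        have hXR : (X n ω t : ℝ) ≤ (a n : ℝ) := by exact_mod_cast hX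
        have hdiv : (X n ω t : ℝ) / a n ≤ 1 := by
          rw [div_le_one hapos]; exact hXR
        have habs : |(0:ℝ) - t| ≤ η := by
          rw [zero_sub, abs_neg, abs_of_nonneg ht0]; linarith
        have hfc := hηuc 0 ⟨le_refl _, by linarith⟩ t ⟨ht0, by linarith⟩ habs
        have : f 0 - f t < ε/2 := lt_of_le_of_lt (le_abs_self _) hfc
        rw [hf0] at this
        linarith
      · -- t ≥ η
        have hs : t - η ∈ Set.Icc (0:ℝ) (t₀+1) := ⟨by linarith, by linarith⟩
        have hcle1 : f (t - η) ≤ 1 := (hfrange _ (Set.mem_Ici.mpr hs.1)).2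
        have hcge : c₀ ≤ f (t - η) :=
          hA (Set.mem_Ici.mpr hs.1) (Set.mem_Ici.mpr ht₀1) hs.2
        have hfinvs : finv (f (t - η)) = t - η := hfinv _ (Set.mem_Ici.mpr hs.1)
        have hH := H (f (t - η)) ⟨hcge, hcle1⟩
        rw [hfinvs] at hH
        have hTle : T n ω (f (t - η)) ≤ t - η + δ := by
          have := abs_le.mp hH; linarith [this.2]
        have hTlt : T n ω (f (t - η)) < t := by linarith
        have hSne' : {u : ℝ | 0 ≤ u ∧ (X n ω u : ℝ) ≤ f (t - η) * a n}.Nonempty := by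
          obtain ⟨u, hu0, hu1⟩ := hSne
          exact ⟨u, hu0, le_trans hu1 (by nlinarith)⟩
        rw [hT] at hTlt
        obtain ⟨u, hu, hult⟩ := exists_lt_of_csInf_lt hSne' hTlt
        have hXle : X n ω t ≤ X n ω u := hmono n ω (le_of_lt hult)
        have hXR : (X n ω t : ℝ) ≤ (X n ω u : ℝ) := by exact_mod_cast hXle
        have hdiv : (X n ω t : ℝ) / a n ≤ f (t - η) := by
          rw [div_le_iff₀ hapos]
          exact le_trans hXR hu.2
        have habs : |(t - η) - t| ≤ η := by
          rw [show (t - η) - t = -η by ring, abs_neg, abs_of_pos hη0]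
        have hfc := hηuc (t - η) hs t ⟨ht0, by linarith⟩ habs
        have : f (t - η) - f t < ε/2 := lt_of_le_of_lt (le_abs_self _) hfc
        linarith
    rw [abs_sub_lt_iff]
    exact ⟨hupp, hlow⟩
  -- squeeze
  refine tendsto_of_tendsto_of_tendsto_of_le_of_le' tendsto_const_nhds key
    (Eventually.of_forall fun n => zero_le) ?_
  filter_upwards [ha.eventually_ge_atTop 1] with n han
  apply measure_mono
  intro ω hω
  obtain ⟨t, ht, hεlt⟩ := hω
  by_contra hP
  simp only [Set.mem_setOf_eq, not_exists, not_and, not_lt] at hP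
  have H : ∀ c ∈ Set.Icc c₀ 1, |T n ω c - finv c| ≤ δ := fun c hc => hP c hc
  have := hdet n han ω H t ht
  linarith [lt_trans hεlt this]
end
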